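/- Expanding the Horowitz-Myers geon metric in its special defining function x yields θ = 0 and κ = −(n−1)dξ² + ∑_{i=3}^n dφ_i², so the mass aspect is tr_δ κ = −1. -/

import Mathlib

open Real Filter Asymptotics Set
open scoped Topology

/-- MVT-based quadratic remainder: if `G 0 = 0` and `G' = D` near `0` with `D =O id`,
then `G =O u^2`. -/
lemma quad_remainder {G D : ℝ → ℝ} (hG0 : G 0 = 0)
    (hG : ∀ᶠ t in 𝓝 (0:ℝ), HasDerivAt G (D t) t)
    (hD : D =O[𝓝 (0:ℝ)] fun t => t) :
    G =O[𝓝 (0:ℝ)] fun u => u ^ 2 := by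
  obtain ⟨C, hC0, hC⟩ := hD.exists_nonneg
  have hC' : ∀ᶠ t in 𝓝 (0:ℝ), ‖D t‖ ≤ C * ‖t‖ := hC.bound
  obtain ⟨δ, hδ0, hδ⟩ := Metric.eventually_nhds_iff.1 (hG.and hC')
  rw [isBigO_iff]
  refine ⟨C, ?_⟩
  have hev : ∀ᶠ u in 𝓝 (0:ℝ), dist u 0 < δ := Metric.eventually_nhds_iff.2 ⟨δ, hδ0, fun _ h => h⟩
  filter_upwards [hev] with u hu
  have habs : |u| < δ := by simpa [Real.dist_eq] using hu
  set s : Set ℝ := Icc (-|u|) |u|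
  have hmem : ∀ t ∈ s, dist t 0 < δ := by
    intro t ht
    rw [Real.dist_eq, sub_zero]
    exact lt_of_le_of_lt (abs_le.2 ⟨ht.1, ht.2⟩) habs
  have key : ‖G u - G 0‖ ≤ (C * |u|) * ‖u - 0‖ := by
    refine (convex_Icc _ _).norm_image_sub_le_of_norm_hasDerivWithin_le
      (f' := D) (fun t ht => ((hδ (hmem t ht)).1).hasDerivWithinAt)
      (fun t ht => ?_) ?_ ?_
    · exact le_trans (hδ (hmem t ht)).2
        (mul_le_mul_of_nonneg_left (abs_le.2 ⟨ht.1, ht.2⟩) hC0)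
    · exact ⟨neg_nonpos.2 (abs_nonneg u), abs_nonneg u⟩
    · exact ⟨neg_abs_le u, le_abs_self u⟩
  rw [hG0, sub_zero, sub_zero] at key
  calc ‖G u‖ ≤ C * |u| * ‖u‖ := key
    _ = C * ‖u ^ 2‖ := by simp only [Real.norm_eq_abs, abs_pow]; rw [mul_assoc, ← sq, sq_abs]

/-- Composition with `x ↦ x^n/4` and comparison with `x^(n+1)` on `𝓝[>] 0`. -/
lemma comp_bound {G : ℝ → ℝ} (hG : G =O[𝓝 (0:ℝ)] fun u => u ^ 2) {n : ℕ} (hn : 3 ≤ n) :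
    (fun x : ℝ => G (x ^ n / 4)) =O[𝓝[>] (0:ℝ)] fun x => x ^ (n + 1) := by
  have hq : Filter.Tendsto (fun x : ℝ => x ^ n / 4) (𝓝[>] (0:ℝ)) (𝓝 (0:ℝ)) := by
    have : Filter.Tendsto (fun x : ℝ => x ^ n / 4) (𝓝 (0:ℝ)) (𝓝 ((0:ℝ) ^ n / 4)) := by
      exact (continuous_pow n).div_const 4 |>.tendsto 0
    simpa [zero_pow (by omega : n ≠ 0)] using this.mono_left nhdsWithin_le_nhds
  have h1 : (fun x : ℝ => G (x ^ n / 4)) =O[𝓝[>] (0:ℝ)] fun x => (x ^ n / 4) ^ 2 :=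
    hG.comp_tendsto hq
  refine h1.trans ?_
  rw [isBigO_iff]
  refine ⟨1, ?_⟩
  filter_upwards [Ioo_mem_nhdsGT (by norm_num : (0:ℝ) < 1)] with x hx
  have hx0 : 0 < x := hx.1
  have hx1 : x ≤ 1 := hx.2.le
  have h2 : (x ^ n / 4) ^ 2 = x ^ (2 * n) / 16 := by
    rw [div_pow, ← pow_mul]; norm_num [mul_comm]
  have h3 : x ^ (2 * n) ≤ x ^ (n + 1) :=
    pow_le_pow_of_le_one hx0.le hx1 (by omega)
  rw [Real.norm_eq_abs, Real.norm_eq_abs, abs_of_pos (by positivity), abs_of_pos (by positivity),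
    one_mul, h2]
  nlinarith [pow_pos hx0 (n+1)]

/-- Expansion of `(1+u)^a`. -/
lemma geA (a : ℝ) :
    (fun u : ℝ => (1 + u) ^ a - 1 - a * u) =O[𝓝 (0:ℝ)] fun u => u ^ 2 := by
  set D : ℝ → ℝ := fun u => a * (1 + u) ^ (a - 1) - a with hDdef
  have hG : ∀ᶠ t in 𝓝 (0:ℝ), HasDerivAt (fun u : ℝ => (1 + u) ^ a - 1 - a * u) (D t) t := by
    filter_upwards [Ioo_mem_nhds (by norm_num : (-1:ℝ) < 0) (by norm_num : (0:ℝ) < 1)] with t ht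
    have h0 : (0:ℝ) < 1 + t := by linarith [ht.1]
    have h1 : HasDerivAt (fun u : ℝ => 1 + u) 1 t := (hasDerivAt_id t).const_add 1
    have h2 := h1.rpow_const (p := a) (Or.inl h0.ne')
    have h3 := (h2.sub_const 1).sub ((hasDerivAt_id t).const_mul a)
    refine h3.congr_deriv ?_
    simp [hDdef]
  have hD0 : D 0 = 0 := by simp [hDdef]
  have hdiff : DifferentiableAt ℝ D 0 := by
    have d1 : DifferentiableAt ℝ (fun u : ℝ => 1 + u) 0 := differentiableAt_id.const_add 1
    exact ((d1.rpow_const (Or.inl (by norm_num))).const_mul a).sub_const a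
  have hD : D =O[𝓝 (0:ℝ)] fun t => t := by
    have := hdiff.isBigO_sub
    simpa [hD0] using this
  exact quad_remainder (by simp) hG hD

/-- Expansion of `(1+u)^a * ((1-u)/(1+u))^2`. -/
lemma geB (a : ℝ) :
    (fun u : ℝ => (1 + u) ^ a * ((1 - u) / (1 + u)) ^ 2 - 1 - (a - 4) * u)
      =O[𝓝 (0:ℝ)] fun u => u ^ 2 := by
  set D : ℝ → ℝ := fun u => a * (1 + u) ^ (a - 1) * ((1 - u) / (1 + u)) ^ 2
      + (1 + u) ^ a * (2 * ((1 - u) / (1 + u)) * ((-2) / (1 + u) ^ 2)) - (a - 4) with hDdef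
  have hG : ∀ᶠ t in 𝓝 (0:ℝ), HasDerivAt
      (fun u : ℝ => (1 + u) ^ a * ((1 - u) / (1 + u)) ^ 2 - 1 - (a - 4) * u) (D t) t := by
    filter_upwards [Ioo_mem_nhds (by norm_num : (-1:ℝ) < 0) (by norm_num : (0:ℝ) < 1)] with t ht
    have h0 : (0:ℝ) < 1 + t := by linarith [ht.1]
    have h1 : HasDerivAt (fun u : ℝ => 1 + u) 1 t := (hasDerivAt_id t).const_add 1
    have h1' : HasDerivAt (fun u : ℝ => 1 - u) (-1) t := (hasDerivAt_id t).const_sub 1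
    have hr : HasDerivAt (fun u : ℝ => (1 - u) / (1 + u))
        (((-1) * (1 + t) - (1 - t) * 1) / (1 + t) ^ 2) t := h1'.div h1 h0.ne'
    have h2 := h1.rpow_const (p := a) (Or.inl h0.ne')
    have h3 := (h2.mul (hr.pow 2)).sub_const 1 |>.sub ((hasDerivAt_id t).const_mul (a - 4))
    refine h3.congr_deriv ?_
    have h4 : (1 + t) ^ 2 ≠ 0 := pow_ne_zero 2 h0.ne'
    have h5 : (1 + t) ≠ 0 := h0.ne'
    simp only [hDdef, Pi.pow_apply]
    rw [Real.rpow_sub_one h5]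
    field_simp
    linear_combination (4 * (1 + t) ^ a * (t - 1)) * (mul_inv_cancel₀ h5)
  have hD0 : D 0 = 0 := by norm_num [hDdef]
  have hdiff : DifferentiableAt ℝ D 0 := by
    have d1 : DifferentiableAt ℝ (fun u : ℝ => 1 + u) 0 := differentiableAt_id.const_add 1
    have d2 : DifferentiableAt ℝ (fun u : ℝ => 1 - u) 0 := differentiableAt_id.const_sub 1
    have d3 : DifferentiableAt ℝ (fun u : ℝ => (1 - u) / (1 + u)) 0 :=
      d2.div d1 (by norm_num)
    have d4 := d1.rpow_const (p := a - 1) (Or.inl (by norm_num))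
    have d5 := d1.rpow_const (p := a) (Or.inl (by norm_num))
    have d6 : DifferentiableAt ℝ (fun u : ℝ => (-2) / (1 + u) ^ 2) 0 :=
      (differentiableAt_const (-2)).div (d1.pow 2) (by norm_num)
    exact (((d4.const_mul a).mul (d3.pow 2)).add
      (d5.mul ((d3.const_mul 2).mul d6))).sub_const (a - 4)
  have hD : D =O[𝓝 (0:ℝ)] fun t => t := by
    have := hdiff.isBigO_sub
    simpa [hD0] using this
  exact quad_remainder (by norm_num) hG hD

/-- Expanding the Horowitz-Myers geon metric
`h_x = (1+x^n/4)^{4/n}[((1−x^n/4)/(1+x^n/4))² dξ² + ∑ dφ_i²]`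
in its special defining function `x` as
`h_x = δ + (x^{n−1}/(n−1))θ + (x^n/n)κ + O(x^{n+1})`
yields `θ = 0` and `κ = −(n−1)dξ² + ∑ dφ_i²`, so the mass aspect is `tr_δ κ = −1`.
(The index `0` of `Fin (n-1)` is the `ξ`-direction, the others are the `φ_i`.) -/
theorem horowitz_myers_geon_expansion
    (n : ℕ) (hn : 3 ≤ n)
    (h : ℝ → Fin (n - 1) → Fin (n - 1) → ℝ)
    (hdef : ∀ x i j, h x i j =
      if i = j then
        (if (i : ℕ) = 0 then
          (1 + x ^ n / 4) ^ ((4 : ℝ) / n) * ((1 - x ^ n / 4) / (1 + x ^ n / 4)) ^ 2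
        else (1 + x ^ n / 4) ^ ((4 : ℝ) / n))
      else 0)
    (θ κ : Fin (n - 1) → Fin (n - 1) → ℝ)
    (hθ : θ = 0)
    (hκ : ∀ i j, κ i j =
      if i = j then (if (i : ℕ) = 0 then -((n : ℝ) - 1) else 1) else 0) :
    (∀ i j, (fun x : ℝ => h x i j -
        ((if i = j then (1 : ℝ) else 0) + x ^ (n - 1) / ((n : ℝ) - 1) * θ i j
          + x ^ n / (n : ℝ) * κ i j))
        =O[𝓝[>] (0 : ℝ)] fun x => x ^ (n + 1)) ∧
    (∑ i, κ i i = -1) := by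
  have hn0 : (n : ℝ) ≠ 0 := Nat.cast_ne_zero.2 (by omega)
  constructor
  · intro i j
    by_cases hij : i = j
    · subst hij
      by_cases hi0 : (i : ℕ) = 0
      · have heq : (fun x : ℝ => h x i i -
            ((if i = i then (1 : ℝ) else 0) + x ^ (n - 1) / ((n : ℝ) - 1) * θ i i
              + x ^ n / (n : ℝ) * κ i i))
            = fun x : ℝ => (1 + x ^ n / 4) ^ ((4:ℝ)/n)
                * ((1 - x ^ n / 4) / (1 + x ^ n / 4)) ^ 2 - 1
                - ((4:ℝ)/n - 4) * (x ^ n / 4) := by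
          funext x
          simp only [hdef, hκ, hθ, if_pos rfl, if_pos hi0, Pi.zero_apply, if_true]
          field_simp
          ring
        rw [heq]
        exact comp_bound (geB ((4:ℝ)/n)) hn
      · have heq : (fun x : ℝ => h x i i -
            ((if i = i then (1 : ℝ) else 0) + x ^ (n - 1) / ((n : ℝ) - 1) * θ i i
              + x ^ n / (n : ℝ) * κ i i))
            = fun x : ℝ => (1 + x ^ n / 4) ^ ((4:ℝ)/n) - 1 - ((4:ℝ)/n) * (x ^ n / 4) := by
          funext x
          simp only [hdef, hκ, hθ, if_pos rfl, if_neg hi0, Pi.zero_apply, if_true]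
          field_simp
          ring
        rw [heq]
        exact comp_bound (geA ((4:ℝ)/n)) hn
    · have heq : (fun x : ℝ => h x i j -
          ((if i = j then (1 : ℝ) else 0) + x ^ (n - 1) / ((n : ℝ) - 1) * θ i j
            + x ^ n / (n : ℝ) * κ i j)) = fun _ : ℝ => (0:ℝ) := by
        funext x
        simp [hdef, hκ, hθ, hij]
      rw [heq]
      exact isBigO_zero _ _
  · haveI : NeZero (n - 1) := ⟨by omega⟩
    have hκ' : ∀ i : Fin (n - 1), κ i i = 1 + (if i = (0 : Fin (n - 1)) then -(n:ℝ) else 0) := by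
      intro i
      rw [hκ, if_pos rfl]
      by_cases hi : (i : ℕ) = 0
      · rw [if_pos hi, if_pos (by exact Fin.ext hi)]
        ring
      · rw [if_neg hi, if_neg (fun hc => hi (by simp [hc]))]
        ring
    rw [Finset.sum_congr rfl (fun i _ => hκ' i), Finset.sum_add_distrib,
      Finset.sum_const, Finset.sum_ite_eq' Finset.univ (0 : Fin (n-1)) (fun _ => -(n:ℝ))]
    simp only [Finset.mem_univ, if_pos, Finset.card_univ, Fintype.card_fin, nsmul_eq_mul,
      mul_one]
    have : ((n - 1 : ℕ) : ℝ) = (n : ℝ) - 1 := by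
      rw [Nat.cast_sub (by omega)]; norm_num
    rw [this]
    ring
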